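/- Let X = (X_n)_{n∈ℤ} be a discrete white noise and let p > 0. Then ℙ(sup_{n∈ℤ} |X_n|/(1+|n|)^{1/p} < ∞) = 1 if and only if 𝔼[|X_0|^p] < ∞; moreover, if 𝔼[|X_0|^p] = ∞, then ℙ(sup_{n∈ℤ} |X_n|/(1+|n|)^{1/p} < ∞) = 0. -/

import Mathlib

open MeasureTheory ProbabilityTheory
open scoped ENNReal NNReal

section aux

variable {Ω : Type*} [MeasurableSpace Ω] {μ : Measure Ω}

lemma aux_tsum_ite_eq {z : ℝ≥0∞} (hz : z ≠ ⊤) :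
    (∑' n : ℕ, if (n : ℝ≥0∞) < z then (1 : ℝ≥0∞) else 0) = (⌈z.toReal⌉₊ : ℝ≥0∞) := by
  have hiff : ∀ n : ℕ, ((n : ℝ≥0∞) < z ↔ n < ⌈z.toReal⌉₊) := by
    intro n
    rw [← ENNReal.ofReal_natCast, ENNReal.ofReal_lt_iff_lt_toReal (Nat.cast_nonneg n) hz,
      Nat.lt_ceil]
  have h1 : (∑' n : ℕ, if (n : ℝ≥0∞) < z then (1 : ℝ≥0∞) else 0)
      = ∑ n ∈ Finset.range ⌈z.toReal⌉₊, (if (n : ℝ≥0∞) < z then (1 : ℝ≥0∞) else 0) := by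
    refine tsum_eq_sum ?_
    intro n hn
    rw [if_neg]
    rw [hiff n]
    simpa using hn
  rw [h1, Finset.sum_congr rfl (fun n hn => if_pos ((hiff n).2 (Finset.mem_range.1 hn)))]
  simp

lemma aux_le_tsum_ite (z : ℝ≥0∞) :
    z ≤ ∑' n : ℕ, if (n : ℝ≥0∞) < z then (1 : ℝ≥0∞) else 0 := by
  rcases eq_or_ne z ⊤ with hz | hz
  · subst hz
    have : (∑' _ : ℕ, (1 : ℝ≥0∞)) = ⊤ := by
      simp [ENNReal.tsum_const_eq_top_of_ne_zero one_ne_zero]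
    calc (⊤ : ℝ≥0∞) = ∑' _ : ℕ, (1 : ℝ≥0∞) := this.symm
      _ ≤ _ := by
        refine ENNReal.tsum_le_tsum fun n => ?_
        rw [if_pos (ENNReal.natCast_lt_top n)]
  · rw [aux_tsum_ite_eq hz]
    have h2 : z.toReal ≤ (⌈z.toReal⌉₊ : ℝ) := Nat.le_ceil _
    calc z = ENNReal.ofReal z.toReal := (ENNReal.ofReal_toReal hz).symm
      _ ≤ ENNReal.ofReal (⌈z.toReal⌉₊ : ℝ) := ENNReal.ofReal_le_ofReal h2
      _ = _ := ENNReal.ofReal_natCast _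

lemma aux_tsum_ite_le (z : ℝ≥0∞) :
    (∑' n : ℕ, if (n : ℝ≥0∞) < z then (1 : ℝ≥0∞) else 0) ≤ z + 1 := by
  rcases eq_or_ne z ⊤ with hz | hz
  · simp [hz]
  · rw [aux_tsum_ite_eq hz]
    have h0 : 0 ≤ z.toReal := ENNReal.toReal_nonneg
    have h2 : (⌈z.toReal⌉₊ : ℝ) ≤ z.toReal + 1 := (Nat.ceil_lt_add_one h0).le
    calc ((⌈z.toReal⌉₊ : ℕ) : ℝ≥0∞) = ENNReal.ofReal (⌈z.toReal⌉₊ : ℝ) :=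
          (ENNReal.ofReal_natCast _).symm
      _ ≤ ENNReal.ofReal (z.toReal + 1) := ENNReal.ofReal_le_ofReal h2
      _ = ENNReal.ofReal z.toReal + ENNReal.ofReal 1 := ENNReal.ofReal_add h0 zero_le_one
      _ = z + 1 := by rw [ENNReal.ofReal_toReal hz, ENNReal.ofReal_one]

lemma aux_tsum_meas_eq {Z : Ω → ℝ≥0∞} (hZ : Measurable Z) :
    (∑' n : ℕ, μ {ω | (n : ℝ≥0∞) < Z ω})
      = ∫⁻ ω, (∑' n : ℕ, if (n : ℝ≥0∞) < Z ω then (1 : ℝ≥0∞) else 0) ∂μ := by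
  have hpt : ∀ n : ℕ, μ {ω | (n : ℝ≥0∞) < Z ω}
      = ∫⁻ ω, (if (n : ℝ≥0∞) < Z ω then (1 : ℝ≥0∞) else 0) ∂μ := by
    intro n
    have h : (fun ω => if (n : ℝ≥0∞) < Z ω then (1 : ℝ≥0∞) else 0)
        = Set.indicator {ω | (n : ℝ≥0∞) < Z ω} (1 : Ω → ℝ≥0∞) := by
      ext ω; simp [Set.indicator_apply]
    rw [h, lintegral_indicator_one (measurableSet_lt measurable_const hZ)]
  simp_rw [hpt]
  rw [← lintegral_tsum (fun n => (Measurable.ite (measurableSet_lt measurable_const hZ)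
    measurable_const measurable_const).aemeasurable)]

lemma aux_lintegral_le_tsum_meas {Z : Ω → ℝ≥0∞} (hZ : Measurable Z) :
    ∫⁻ ω, Z ω ∂μ ≤ ∑' n : ℕ, μ {ω | (n : ℝ≥0∞) < Z ω} := by
  rw [aux_tsum_meas_eq hZ]
  exact lintegral_mono fun ω => aux_le_tsum_ite (Z ω)

lemma aux_tsum_meas_le_lintegral {Z : Ω → ℝ≥0∞} (hZ : Measurable Z) :
    (∑' n : ℕ, μ {ω | (n : ℝ≥0∞) < Z ω}) ≤ (∫⁻ ω, Z ω ∂μ) + μ Set.univ := by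
  rw [aux_tsum_meas_eq hZ]
  calc ∫⁻ ω, (∑' n : ℕ, if (n : ℝ≥0∞) < Z ω then (1 : ℝ≥0∞) else 0) ∂μ
      ≤ ∫⁻ ω, (Z ω + 1) ∂μ := lintegral_mono fun ω => aux_tsum_ite_le (Z ω)
    _ = (∫⁻ ω, Z ω ∂μ) + μ Set.univ := by
        rw [lintegral_add_right _ measurable_const, lintegral_one]

lemma aux_iIndepSet (P : Measure Ω) [IsProbabilityMeasure P]
    (X : ℤ → Ω → ℝ) (hmeas : ∀ n, Measurable (X n))
    (hindep : iIndepFun X P)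
    (s : ℕ → Set ℝ) (hs : ∀ n, MeasurableSet (s n)) :
    iIndepSet (fun n : ℕ => X n ⁻¹' s n) P := by
  rw [iIndepSet_iff_meas_biInter (fun n => (hmeas _) (hs n))]
  intro F
  classical
  set t : ℤ → Set ℝ := fun m => s m.toNat with ht
  have htm : ∀ m : ℤ, MeasurableSet (t m) := fun m => hs _
  set e : ℕ ↪ ℤ := ⟨(↑· : ℕ → ℤ), Nat.cast_injective⟩ with he
  have key := hindep.measure_inter_preimage_eq_mul (F.map e) (sets := t)
    (fun i _ => htm i)
  have h1 : (⋂ i ∈ F.map e, X i ⁻¹' t i) = ⋂ n ∈ F, X (n : ℤ) ⁻¹' s n := by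
    ext ω
    simp only [Set.mem_iInter, Finset.mem_map, he, Function.Embedding.coeFn_mk]
    constructor
    · intro h n hn
      have := h (n : ℤ) ⟨n, hn, rfl⟩
      simpa [ht] using this
    · rintro h i ⟨n, hn, rfl⟩
      simpa [ht] using h n hn
  have h2 : (∏ i ∈ F.map e, P (X i ⁻¹' t i)) = ∏ n ∈ F, P (X (n : ℤ) ⁻¹' s n) := by
    rw [Finset.prod_map]
    refine Finset.prod_congr rfl fun n _ => ?_
    simp [ht, he]
  rw [h1, h2] at key
  exact key

end aux

set_option maxHeartbeats 1600000

/-- For a discrete white noise `X` and `p > 0`, one has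
`sup_n |X_n|/(1+|n|)^{1/p} < ∞` almost surely iff `𝔼[|X_0|^p] < ∞`; if the moment is
infinite, the probability is `0`. -/
theorem weighted_linfty_iff_finite_moment
    {Ω : Type*} [MeasurableSpace Ω] (P : Measure Ω) [IsProbabilityMeasure P]
    (X : ℤ → Ω → ℝ) (hmeas : ∀ n, Measurable (X n))
    (hindep : iIndepFun X P)
    (hident : ∀ n : ℤ, IdentDistrib (X n) (X 0) P P)
    (p : ℝ) (hp : 0 < p) :
    (P {ω | ∃ C : ℝ, ∀ n : ℤ, |X n ω| ≤ C * (1 + |(n : ℝ)|) ^ (1 / p)} = 1 ↔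
      (∫⁻ ω, ENNReal.ofReal (|X 0 ω| ^ p) ∂P) < ⊤) ∧
    ((∫⁻ ω, ENNReal.ofReal (|X 0 ω| ^ p) ∂P) = ⊤ →
      P {ω | ∃ C : ℝ, ∀ n : ℤ, |X n ω| ≤ C * (1 + |(n : ℝ)|) ^ (1 / p)} = 0) := by
  classical
  set E : Set Ω := {ω | ∃ C : ℝ, ∀ n : ℤ, |X n ω| ≤ C * (1 + |(n : ℝ)|) ^ (1 / p)} with hE
  set Z : Ω → ℝ≥0∞ := fun ω => ENNReal.ofReal (|X 0 ω| ^ p) with hZdef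
  have hZ : Measurable Z :=
    (((Real.continuous_rpow_const hp.le).measurable.comp ((hmeas 0).abs)).ennreal_ofReal)
  -- weight facts
  have hw1 : ∀ n : ℤ, (1 : ℝ) ≤ (1 + |(n : ℝ)|) ^ (1 / p) := by
    intro n
    have h1 : (1 : ℝ) ≤ 1 + |(n : ℝ)| := by
      have := abs_nonneg (n : ℝ); linarith
    calc (1 : ℝ) = 1 ^ (1 / p) := (Real.one_rpow _).symm
      _ ≤ (1 + |(n : ℝ)|) ^ (1 / p) :=
        Real.rpow_le_rpow zero_le_one h1 (one_div_nonneg.2 hp.le)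
  have hw0 : ∀ n : ℤ, (0 : ℝ) ≤ (1 + |(n : ℝ)|) ^ (1 / p) :=
    fun n => le_trans zero_le_one (hw1 n)
  have hpow : ∀ n : ℤ, ((1 + |(n : ℝ)|) ^ (1 / p)) ^ p = 1 + |(n : ℝ)| := by
    intro n
    have h0 : (0 : ℝ) ≤ 1 + |(n : ℝ)| := by positivity
    have h := Real.rpow_mul h0 (1 / p) p
    rw [one_div_mul_cancel hp.ne', Real.rpow_one] at h
    exact h.symm
  -- Key 1: finite moment implies P E = 1
  have key1 : (∫⁻ ω, Z ω ∂P) ≠ ⊤ → P E = 1 := by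
    intro hI
    set s : ℤ → Set Ω := fun n => {ω | (1 + |(n : ℝ)|) ^ (1 / p) < |X n ω|} with hs
    have hsub : ∀ n : ℤ, P (s n) ≤ P {ω | ((n.natAbs : ℕ) : ℝ≥0∞) < Z ω} := by
      intro n
      have hmset : MeasurableSet {x : ℝ | (1 + |(n : ℝ)|) ^ (1 / p) < |x|} :=
        measurableSet_lt measurable_const continuous_abs.measurable
      have heq : P (s n) = P (X 0 ⁻¹' {x : ℝ | (1 + |(n : ℝ)|) ^ (1 / p) < |x|}) :=
        (hident n).measure_mem_eq hmset
      rw [heq]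
      refine measure_mono ?_
      intro ω hω
      simp only [Set.mem_preimage, Set.mem_setOf_eq] at hω ⊢
      have h1 : 1 + |(n : ℝ)| < |X 0 ω| ^ p := by
        have := Real.rpow_lt_rpow (Real.rpow_nonneg (by positivity) _) hω hp
        rwa [hpow n] at this
      have h2 : ((n.natAbs : ℕ) : ℝ) < |X 0 ω| ^ p := by
        rw [Nat.cast_natAbs, Int.cast_abs]
        linarith
      have h3 : (0 : ℝ) < |X 0 ω| ^ p := lt_of_le_of_lt (Nat.cast_nonneg _) h2
      rw [hZdef, ← ENNReal.ofReal_natCast]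
      exact (ENNReal.ofReal_lt_ofReal_iff h3).2 h2
    have hsum : (∑' n : ℤ, P (s n)) ≠ ⊤ := by
      have hzsum : (∑' n : ℤ, P (s n))
          = ∑' n : ℕ, (P (s (n : ℤ)) + P (s (-((n : ℤ) + 1)))) :=
        (tsum_nat_add_neg_add_one ENNReal.summable).symm
      rw [hzsum, ENNReal.tsum_add]
      have hb : (∑' n : ℕ, P {ω | ((n : ℕ) : ℝ≥0∞) < Z ω}) ≠ ⊤ := by
        refine ne_top_of_le_ne_top ?_ (aux_tsum_meas_le_lintegral hZ)
        simp only [measure_univ, ne_eq, ENNReal.add_eq_top, hI, ENNReal.one_ne_top, or_self,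
          not_false_eq_true]
      have hb1 : (∑' n : ℕ, P (s (n : ℤ))) ≠ ⊤ := by
        refine ne_top_of_le_ne_top hb (ENNReal.tsum_le_tsum fun n => ?_)
        have := hsub (n : ℤ)
        simpa using this
      have hb2 : (∑' n : ℕ, P (s (-((n : ℤ) + 1)))) ≠ ⊤ := by
        refine ne_top_of_le_ne_top hb (ENNReal.tsum_le_tsum fun n => ?_)
        have h := hsub (-((n : ℤ) + 1))
        have hna : (-((n : ℤ) + 1)).natAbs = n + 1 := by omega
        refine le_trans h (measure_mono ?_)
        intro ω hω
        simp only [Set.mem_setOf_eq] at hω ⊢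
        refine lt_of_le_of_lt ?_ hω
        rw [hna]
        exact_mod_cast Nat.cast_le.2 (Nat.le_succ n)
      exact ENNReal.add_ne_top.2 ⟨hb1, hb2⟩
    have hlim : P (Filter.limsup s Filter.cofinite) = 0 :=
      measure_limsup_cofinite_eq_zero hsum
    have hEc : Eᶜ ⊆ Filter.limsup s Filter.cofinite := by
      intro ω hω
      rw [Filter.mem_limsup_iff_frequently_mem, Filter.frequently_cofinite_iff_infinite]
      by_contra hfin
      rw [Set.not_infinite] at hfin
      apply hω
      set F := hfin.toFinset with hF
      refine ⟨1 + ∑ m ∈ F, |X m ω|, fun n => ?_⟩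
      have hCge : (1 : ℝ) ≤ 1 + ∑ m ∈ F, |X m ω| := by
        have : (0 : ℝ) ≤ ∑ m ∈ F, |X m ω| :=
          Finset.sum_nonneg fun m _ => abs_nonneg _
        linarith
      by_cases hn : n ∈ F
      · have h1 : |X n ω| ≤ ∑ m ∈ F, |X m ω| :=
          Finset.single_le_sum (fun m _ => abs_nonneg (X m ω)) hn
        calc |X n ω| ≤ 1 + ∑ m ∈ F, |X m ω| := by linarith
          _ = (1 + ∑ m ∈ F, |X m ω|) * 1 := (mul_one _).symm
          _ ≤ (1 + ∑ m ∈ F, |X m ω|) * ((1 + |(n : ℝ)|) ^ (1 / p)) := by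
              exact mul_le_mul_of_nonneg_left (hw1 n) (by linarith)
      · have hns : ω ∉ s n := by
          intro hmem
          exact hn (hfin.mem_toFinset.2 hmem)
        have h1 : |X n ω| ≤ (1 + |(n : ℝ)|) ^ (1 / p) := le_of_not_gt hns
        calc |X n ω| ≤ (1 + |(n : ℝ)|) ^ (1 / p) := h1
          _ = 1 * ((1 + |(n : ℝ)|) ^ (1 / p)) := (one_mul _).symm
          _ ≤ (1 + ∑ m ∈ F, |X m ω|) * ((1 + |(n : ℝ)|) ^ (1 / p)) :=
            mul_le_mul_of_nonneg_right hCge (hw0 n)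
    have hEc0 : P Eᶜ = 0 := measure_mono_null hEc hlim
    have h1 : (1 : ℝ≥0∞) ≤ P E := by
      calc (1 : ℝ≥0∞) = P Set.univ := (measure_univ).symm
        _ = P (E ∪ Eᶜ) := by rw [Set.union_compl_self]
        _ ≤ P E + P Eᶜ := measure_union_le _ _
        _ = P E := by rw [hEc0, add_zero]
    exact le_antisymm prob_le_one h1
  -- Key 2: infinite moment implies P E = 0
  have key2 : (∫⁻ ω, Z ω ∂P) = ⊤ → P E = 0 := by
    intro hI
    -- A C : the event that C works as a constant
    set A : ℝ → Set Ω :=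
      fun C => {ω | ∀ n : ℤ, |X n ω| ≤ C * (1 + |(n : ℝ)|) ^ (1 / p)} with hA
    have hAnull : ∀ k : ℕ, P (A (k : ℝ)) = 0 := by
      intro k
      set C' : ℝ := max (k : ℝ) 1 with hC'
      have hC1 : (1 : ℝ) ≤ C' := le_max_right _ _
      have hC0 : (0 : ℝ) < C' := lt_of_lt_of_le one_pos hC1
      have hAsub : A (k : ℝ) ⊆ A C' := by
        intro ω hω n
        exact le_trans (hω n) (mul_le_mul_of_nonneg_right (le_max_left _ _) (hw0 n))
      have hAmeas : MeasurableSet (A C') := by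
        have : A C' = ⋂ n : ℤ, X n ⁻¹' {x : ℝ | |x| ≤ C' * (1 + |(n : ℝ)|) ^ (1 / p)} := by
          ext ω; simp [hA]
        rw [this]
        exact MeasurableSet.iInter fun n =>
          (hmeas n) (measurableSet_le continuous_abs.measurable measurable_const)
      -- the independent events
      set B : ℕ → Set Ω :=
        fun n => X (n : ℤ) ⁻¹' {x : ℝ | C' * (1 + ((n : ℕ) : ℝ)) ^ (1 / p) < |x|} with hB
      have hsm : ∀ n : ℕ, MeasurableSet {x : ℝ | C' * (1 + ((n : ℕ) : ℝ)) ^ (1 / p) < |x|} :=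
        fun n => measurableSet_lt measurable_const continuous_abs.measurable
      have hBmeas : ∀ n, MeasurableSet (B n) := fun n => (hmeas _) (hsm n)
      have hBindep : iIndepSet B P := aux_iIndepSet P X hmeas hindep _ hsm
      -- divergence of the series
      set c : ℝ≥0∞ := ENNReal.ofReal (C' ^ p) with hc
      have hcp : (0 : ℝ) < C' ^ p := Real.rpow_pos_of_pos hC0 p
      have hc0 : c ≠ 0 := by simp [hc, ENNReal.ofReal_eq_zero, not_le, hcp]
      have hctop : c ≠ ⊤ := ENNReal.ofReal_ne_top
      set W : Ω → ℝ≥0∞ := fun ω => c⁻¹ * Z ω with hW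
      have hWmeas : Measurable W := hZ.const_mul _
      have hWint : (∫⁻ ω, W ω ∂P) = ⊤ := by
        rw [hW]
        rw [lintegral_const_mul _ hZ, hI, ENNReal.mul_top]
        exact ENNReal.inv_ne_zero.2 hctop
      set g : ℕ → ℝ≥0∞ := fun n => P {ω | ((n : ℕ) : ℝ≥0∞) < W ω} with hg
      have hWsum : (∑' n : ℕ, g n) = ⊤ :=
        top_le_iff.1 (hWint ▸ aux_lintegral_le_tsum_meas hWmeas)
      have hWshift : (∑' n : ℕ, g (n + 1)) = ⊤ := by
        by_contra hne
        have hsplit : (∑' n : ℕ, g n) = g 0 + ∑' n : ℕ, g (n + 1) :=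
          tsum_eq_zero_add' ENNReal.summable
        rw [hWsum] at hsplit
        have hne2 : g 0 + (∑' n : ℕ, g (n + 1)) ≠ ⊤ :=
          ENNReal.add_ne_top.2 ⟨ne_top_of_le_ne_top ENNReal.one_ne_top prob_le_one, hne⟩
        exact hne2 hsplit.symm
      have hBsum : (∑' n : ℕ, P (B n)) = ⊤ := by
        rw [← top_le_iff, ← hWshift]
        refine ENNReal.tsum_le_tsum fun n => ?_
        have heq : P (B n) = P (X 0 ⁻¹' {x : ℝ | C' * (1 + ((n : ℕ) : ℝ)) ^ (1 / p) < |x|}) :=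
          (hident (n : ℤ)).measure_mem_eq (hsm n)
        rw [heq]
        refine measure_mono ?_
        intro ω hω
        simp only [hg, Set.mem_setOf_eq, Set.mem_preimage] at hω ⊢
        have hω' : (((n : ℕ) : ℝ≥0∞) + 1) < W ω := by
          refine lt_of_le_of_lt (le_of_eq ?_) hω
          push_cast
          ring
        have h1 : c * (((n : ℕ) : ℝ≥0∞) + 1) < Z ω := by
          have := hω'
          rw [hW] at this
          calc c * (((n : ℕ) : ℝ≥0∞) + 1) < c * W ω := by
                exact ENNReal.mul_lt_mul_right hc0 hctop this
            _ = c * (c⁻¹ * Z ω) := rfl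
            _ = Z ω := by
                rw [← mul_assoc, ENNReal.mul_inv_cancel hc0 hctop, one_mul]
        have h2 : ENNReal.ofReal (C' ^ p * (1 + ((n : ℕ) : ℝ))) < ENNReal.ofReal (|X 0 ω| ^ p) := by
          have hcc : c * (((n : ℕ) : ℝ≥0∞) + 1) = ENNReal.ofReal (C' ^ p * (1 + ((n : ℕ) : ℝ))) := by
            rw [hc, ← ENNReal.ofReal_natCast, ← ENNReal.ofReal_one,
              ← ENNReal.ofReal_add (Nat.cast_nonneg n) zero_le_one,
              ← ENNReal.ofReal_mul hcp.le]
            congr 1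
            ring
          rw [← hcc]
          exact h1
        have h3 : C' ^ p * (1 + ((n : ℕ) : ℝ)) < |X 0 ω| ^ p := by
          have := ENNReal.ofReal_lt_ofReal_iff'.mp h2
          exact this.1
        -- convert back
        by_contra hcon
        push_neg at hcon
        have h4 : |X 0 ω| ^ p ≤ (C' * (1 + ((n : ℕ) : ℝ)) ^ (1 / p)) ^ p :=
          Real.rpow_le_rpow (abs_nonneg _) hcon hp.le
        have h5 : (C' * (1 + ((n : ℕ) : ℝ)) ^ (1 / p)) ^ p
            = C' ^ p * (1 + ((n : ℕ) : ℝ)) := by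
          rw [Real.mul_rpow hC0.le (Real.rpow_nonneg (by positivity) _),
            ← Real.rpow_mul (by positivity), one_div_mul_cancel hp.ne', Real.rpow_one]
        rw [h5] at h4
        linarith
      have hBC2 : P (Filter.limsup B Filter.atTop) = 1 :=
        ProbabilityTheory.measure_limsup_eq_one hBmeas hBindep hBsum
      have hsubc : Filter.limsup B Filter.atTop ⊆ (A C')ᶜ := by
        intro ω hω
        rw [Filter.mem_limsup_iff_frequently_mem] at hω
        obtain ⟨n, hn⟩ := hω.exists
        intro hmem
        have h1 := hmem (n : ℤ)
        have h2 : |((n : ℤ) : ℝ)| = ((n : ℕ) : ℝ) := by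
          push_cast
          exact abs_of_nonneg (Nat.cast_nonneg n)
        rw [h2] at h1
        simp only [hB, Set.mem_preimage, Set.mem_setOf_eq] at hn
        linarith
      have hcompl : P ((A C')ᶜ) = 1 :=
        le_antisymm prob_le_one (hBC2 ▸ measure_mono hsubc)
      have : P (A C') = 0 := (prob_compl_eq_one_iff hAmeas).1 hcompl
      exact measure_mono_null hAsub this
    have hEsub : E ⊆ ⋃ k : ℕ, A (k : ℝ) := by
      intro ω hω
      obtain ⟨C, hC⟩ := hω
      obtain ⟨k, hk⟩ := exists_nat_ge C
      refine Set.mem_iUnion.2 ⟨k, fun n => ?_⟩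
      exact le_trans (hC n) (mul_le_mul_of_nonneg_right hk (hw0 n))
    exact measure_mono_null hEsub (measure_iUnion_null fun k => hAnull k)
  refine ⟨⟨fun h1 => ?_, fun hfin => key1 hfin.ne⟩, fun htop => key2 htop⟩
  by_contra htop
  rw [not_lt, top_le_iff] at htop
  rw [key2 htop] at h1
  exact zero_ne_one h1
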